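/- Let G be a finite group, ω a normalized 3-cocycle on G, X a finite crossed G-set, and λ a twisted monomial structure on X. Then the dimension of the G-invariant subspace (V^{⊗n}_e)^G is equal to the number of regular G-orbits under the monomial action of G on (X^n)_e = {(x_1,…,x_n) : |x_1||x_2|⋯|x_n| = e}. -/

import Mathlib

open scoped BigOperators Classical

noncomputable section

namespace DW

variable {G X : Type} [Group G] [Fintype G]

/-- `ω(g; f, h) := ω(g,f,h)·ω(^g f, g, h)⁻¹·ω(^g f, ^g h, g)`. -/
def omega1 (ω : G → G → G → ℂˣ) (g f h : G) : ℂˣ :=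
  ω g f h * (ω (g * f * g⁻¹) g h)⁻¹ * ω (g * f * g⁻¹) (g * h * g⁻¹) g

/-- `ω(g, g'; h) := ω(g, ^{g'}h, g') / (ω(^{gg'}h, g, g')·ω(g,g',h))`. -/
def omega2 (ω : G → G → G → ℂˣ) (g g' h : G) : ℂˣ :=
  ω g (g' * h * g'⁻¹) g' * (ω ((g * g') * h * (g * g')⁻¹) g g')⁻¹ * (ω g g' h)⁻¹

/-- The partial product `|x_1||x_2|⋯|x_k|` of the degrees of the first `k`
entries of a tuple. -/
def pparts (d : X → G) {n : ℕ} (x : Fin n → X) (k : ℕ) : G :=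
  ((List.ofFn fun j : Fin n => d (x j)).take k).prod

/-- `λ_{X^n}(g; x_1, …, x_n) = (∏ᵢ λ(g;xᵢ)) ∏_{k≥2} ω(g; |x_1|⋯|x_{k-1}|, |x_k|)`. -/
def LamN (ω : G → G → G → ℂˣ) (lam : G → X → ℂˣ) (d : X → G) {n : ℕ}
    (g : G) (x : Fin n → X) : ℂˣ :=
  (∏ i : Fin n, lam g (x i)) *
    ∏ k : Fin n, if k.1 = 0 then 1 else omega1 ω g (pparts d x k.1) (d (x k))

/-- The linear action of `g ∈ G` on `V^{⊗n}`, modelled on the free vector space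
on `X^n`:  `g ▷ v_x = λ_{X^n}(g; x) v_{g·x}`. -/
def rhoL (ω : G → G → G → ℂˣ) (lam : G → X → ℂˣ) (d : X → G) (act : G → X → X)
    {n : ℕ} (g : G) : ((Fin n → X) → ℂ) →ₗ[ℂ] ((Fin n → X) → ℂ) where
  toFun φ := fun y =>
    (LamN ω lam d g (fun i => act g⁻¹ (y i)) : ℂ) * φ (fun i => act g⁻¹ (y i))
  map_add' φ ψ := by funext y; simp [mul_add]
  map_smul' c φ := by
    funext y
    simp only [Pi.smul_apply, smul_eq_mul, RingHom.id_apply]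
    ring

/-- The averaging operator `Av_G = |G|⁻¹ ∑_g (g ▷ ·)` on `V^{⊗n}`. -/
def AvN (ω : G → G → G → ℂˣ) (lam : G → X → ℂˣ) (d : X → G) (act : G → X → X)
    {n : ℕ} : ((Fin n → X) → ℂ) →ₗ[ℂ] ((Fin n → X) → ℂ) :=
  (Fintype.card G : ℂ)⁻¹ • ∑ g : G, rhoL ω lam d act g

/-- The degree-`e` part `V^{⊗n}_e` : functions supported on tuples whose
degrees multiply to the identity. -/
def degSub (d : X → G) (n : ℕ) : Submodule ℂ ((Fin n → X) → ℂ) where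
  carrier := {φ | ∀ x : Fin n → X, pparts d x n ≠ 1 → φ x = 0}
  add_mem' := by
    intro a b ha hb x hx
    have h1 := ha x hx
    have h2 := hb x hx
    simp only [Pi.add_apply, h1, h2, add_zero]
  zero_mem' := by intro x _; rfl
  smul_mem' := by
    intro c a ha x hx
    have h1 := ha x hx
    simp only [Pi.smul_apply, h1, smul_eq_mul, mul_zero]

/-- The space of `G`-invariant vectors in `V^{⊗n}_e`; this is the model of
`Hom_{Z(Vec_G^ω)}(ℂ, V^{⊗n})`. -/
def invSub (ω : G → G → G → ℂˣ) (lam : G → X → ℂˣ) (d : X → G) (act : G → X → X)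
    (n : ℕ) : Submodule ℂ ((Fin n → X) → ℂ) :=
  degSub d n ⊓ ⨅ g : G, LinearMap.eqLocus (rhoL ω lam d act g (n := n)) LinearMap.id

/-- A tuple `x ∈ (X^n)_e` is regular if `λ_{X^n}(g; x) = 1` for every `g` in the
common stabilizer of its entries. -/
def RegT (ω : G → G → G → ℂˣ) (lam : G → X → ℂˣ) (d : X → G) (act : G → X → X)
    {n : ℕ} (x : Fin n → X) : Prop :=
  pparts d x n = 1 ∧ ∀ g : G, (∀ i, act g (x i) = x i) → LamN ω lam d g x = 1

/-- The basis vector `v_{x_1} ⊗ ⋯ ⊗ v_{x_n}` of the model of `V^{⊗n}`. -/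
def deltaF {n : ℕ} (x : Fin n → X) : (Fin n → X) → ℂ :=
  fun y => if y = x then 1 else 0

/-- The underlying tuple map of the braid generator:
`σ_i(x) = (x_1, …, x_{i-1}, |x_i|·x_{i+1}, x_i, x_{i+2}, …, x_n)` (0-indexed). -/
def sigmaTuple (d : X → G) (act : G → X → X) {n : ℕ} (i : ℕ) (hi : i + 1 < n)
    (x : Fin n → X) : Fin n → X :=
  fun j =>
    if j.1 = i then act (d (x ⟨i, Nat.lt_of_succ_lt hi⟩)) (x ⟨i + 1, hi⟩)
    else if j.1 = i + 1 then x ⟨i, Nat.lt_of_succ_lt hi⟩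
    else x j

/-- The inverse of `sigmaTuple`. -/
def sigmaInvTuple (d : X → G) (act : G → X → X) {n : ℕ} (i : ℕ) (hi : i + 1 < n)
    (y : Fin n → X) : Fin n → X :=
  fun j =>
    if j.1 = i then y ⟨i + 1, hi⟩
    else if j.1 = i + 1 then act (d (y ⟨i + 1, hi⟩))⁻¹ (y ⟨i, Nat.lt_of_succ_lt hi⟩)
    else y j

/-- The scalar appearing in the action of the braid generator `σ_i'` on a basis
vector: `ω(|x_1|⋯|x_{i-1}|, |x_{i+1}|, |x_i|)⁻¹ λ(|x_i|; x_{i+1}) ω(|x_1|⋯|x_{i-1}|, |x_i|, |x_{i+1}|)`. -/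
def braidCoef (ω : G → G → G → ℂˣ) (lam : G → X → ℂˣ) (d : X → G) {n : ℕ}
    (i : ℕ) (hi : i + 1 < n) (x : Fin n → X) : ℂˣ :=
  (ω (pparts d x i) (d (x ⟨i + 1, hi⟩)) (d (x ⟨i, Nat.lt_of_succ_lt hi⟩)))⁻¹ *
    lam (d (x ⟨i, Nat.lt_of_succ_lt hi⟩)) (x ⟨i + 1, hi⟩) *
    ω (pparts d x i) (d (x ⟨i, Nat.lt_of_succ_lt hi⟩)) (d (x ⟨i + 1, hi⟩))

/-- The braid operator `σ_i'` on the model of `V^{⊗n}`, determined by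
`σ_i'(v_x) = braidCoef(x) • v_{σ_i(x)}`. -/
def sigmaOp (ω : G → G → G → ℂˣ) (lam : G → X → ℂˣ) (d : X → G) (act : G → X → X)
    {n : ℕ} (i : ℕ) (hi : i + 1 < n) :
    ((Fin n → X) → ℂ) →ₗ[ℂ] ((Fin n → X) → ℂ) where
  toFun φ := fun y =>
    (braidCoef ω lam d i hi (sigmaInvTuple d act i hi y) : ℂ) *
      φ (sigmaInvTuple d act i hi y)
  map_add' φ ψ := by funext y; simp [mul_add]
  map_smul' c φ := by
    funext y
    simp only [Pi.smul_apply, smul_eq_mul, RingHom.id_apply]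
    ring

/-- The orbit relation on tuples for the (entrywise) `G`-action. -/
def tupleOrbRel (act : G → X → X) {n : ℕ} (x y : Fin n → X) : Prop :=
  ∃ g : G, (fun i => act g (x i)) = y

end DW

open DW

section AuxOmega
variable {G X : Type} [Group G]

theorem omega_one_left (ω : G → G → G → ℂˣ)
    (hω : ∀ a b c e : G,
      ω (a * b) c e * ω a b (c * e) = ω a b c * ω a (b * c) e * ω b c e)
    (hωn : ∀ a b : G, ω a 1 b = 1) (a b : G) : ω 1 a b = 1 := by
  have h := hω 1 1 a b
  simp only [one_mul, hωn, mul_one] at h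
  exact left_eq_mul.mp h

theorem omega_one_right (ω : G → G → G → ℂˣ)
    (hω : ∀ a b c e : G,
      ω (a * b) c e * ω a b (c * e) = ω a b c * ω a (b * c) e * ω b c e)
    (hωn : ∀ a b : G, ω a 1 b = 1) (a b : G) : ω a b 1 = 1 := by
  have h := hω a b 1 1
  simp only [hωn, one_mul, mul_one] at h
  exact left_eq_mul.mp h

theorem omega1_one_left (ω : G → G → G → ℂˣ)
    (hω : ∀ a b c e : G,
      ω (a * b) c e * ω a b (c * e) = ω a b c * ω a (b * c) e * ω b c e)
    (hωn : ∀ a b : G, ω a 1 b = 1) (a b : G) : omega1 ω 1 a b = 1 := by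
  simp [omega1, hωn, omega_one_left ω hω hωn, omega_one_right ω hω hωn]

theorem omega1_mid_one (ω : G → G → G → ℂˣ)
    (hω : ∀ a b c e : G,
      ω (a * b) c e * ω a b (c * e) = ω a b c * ω a (b * c) e * ω b c e)
    (hωn : ∀ a b : G, ω a 1 b = 1) (g b : G) : omega1 ω g 1 b = 1 := by
  simp [omega1, hωn, omega_one_left ω hω hωn]

theorem omega2_one_right (ω : G → G → G → ℂˣ)
    (hω : ∀ a b c e : G,
      ω (a * b) c e * ω a b (c * e) = ω a b c * ω a (b * c) e * ω b c e)
    (hωn : ∀ a b : G, ω a 1 b = 1) (g h : G) : omega2 ω g h 1 = 1 := by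
  simp [omega2, hωn, omega_one_left ω hω hωn, omega_one_right ω hω hωn, mul_assoc,
    mul_inv_rev, inv_mul_cancel_left, mul_inv_cancel_left]

end AuxOmega

section AuxPparts
variable {G X : Type} [Group G]

theorem pparts_zero (d : X → G) {n : ℕ} (x : Fin n → X) : pparts d x 0 = 1 := by
  simp [pparts]

theorem pparts_succ (d : X → G) {n : ℕ} (x : Fin n → X) (k : ℕ) (hk : k < n) :
    pparts d x (k + 1) = pparts d x k * d (x ⟨k, hk⟩) := by
  have hk' : k < (List.ofFn fun j : Fin n => d (x j)).length := by simpa using hk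
  simp only [pparts]
  rw [List.prod_take_succ _ _ hk']
  congr 1
  simp [List.get_ofFn]

theorem pparts_last (d : X → G) {n : ℕ} (x : Fin (n + 1) → X) :
    pparts d x (n + 1) = pparts d x n * d (x (Fin.last n)) :=
  pparts_succ d x n (Nat.lt_succ_self n)

theorem pparts_init (d : X → G) {n : ℕ} (x : Fin (n + 1) → X) (k : ℕ) (hk : k ≤ n) :
    pparts d (Fin.init x) k = pparts d x k := by
  simp only [pparts]
  congr 1
  rw [List.ofFn_succ' (fun j : Fin (n+1) => d (x j))]
  rw [List.concat_eq_append, List.take_append_of_le_length (by simpa using hk)]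
  rfl

theorem pparts_act (d : X → G) (act : G → X → X)
    (hd : ∀ (g : G) (x : X), d (act g x) = g * d x * g⁻¹)
    {n : ℕ} (g : G) (x : Fin n → X) (k : ℕ) (hk : k ≤ n) :
    pparts d (fun i => act g (x i)) k = g * pparts d x k * g⁻¹ := by
  induction k with
  | zero => simp [pparts_zero]
  | succ k ih =>
    have hk1 : k < n := hk
    rw [pparts_succ d _ k hk1, pparts_succ d x k hk1, ih (le_of_lt hk1), hd]
    group

end AuxPparts

set_option maxHeartbeats 2000000 in
theorem star_id {G : Type} [Group G] (ω : G → G → G → ℂˣ)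
    (hω : ∀ a b c e : G,
      ω (a * b) c e * ω a b (c * e) = ω a b c * ω a (b * c) e * ω b c e)
    (g h a b : G) :
    omega1 ω (g * h) a b * omega2 ω g h a * omega2 ω g h b =
      omega2 ω g h (a * b) * omega1 ω g (h * a * h⁻¹) (h * b * h⁻¹) *
        omega1 ω h a b := by
  have c1 := congrArg Units.val (hω (g) (h) (a) (b))
  have c2 := congrArg Units.val (hω (g) (h * (a * h⁻¹)) (h) (b))
  have c3 := congrArg Units.val (hω (g) (h * (a * h⁻¹)) (h * (b * h⁻¹)) (h))
  have c4 := congrArg Units.val (hω (g * (h * (a * (h⁻¹ * g⁻¹)))) (g) (h) (b))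
  have c5 := congrArg Units.val (hω (g * (h * (a * (h⁻¹ * g⁻¹)))) (g) (h * (b * h⁻¹)) (h))
  have c6 := congrArg Units.val (hω (g * (h * (a * (h⁻¹ * g⁻¹)))) (g * (h * (b * (h⁻¹ * g⁻¹)))) (g) (h))
  simp only [Units.val_mul] at c1 c2 c3 c4 c5 c6
  simp only [mul_assoc, mul_inv_rev, inv_inv, one_mul, mul_one, inv_mul_cancel_left, mul_inv_cancel_left, mul_inv_cancel, inv_mul_cancel, Units.val_mul] at c1 c2 c3 c4 c5 c6
  apply Units.ext
  simp only [omega1, omega2, Units.val_mul, Units.val_inv_eq_inv_val]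
  simp only [mul_assoc, mul_inv_rev, inv_inv, one_mul, mul_one, inv_mul_cancel_left, mul_inv_cancel_left, mul_inv_cancel, inv_mul_cancel, Units.val_mul]
  have hD : ((ω (g * (h * (a * (h⁻¹ * g⁻¹)))) (g * h) (b) : ℂ) * ((ω (g * (h * (a * (h⁻¹ * g⁻¹)))) (g) (h) : ℂ) * ((ω (g) (h) (a) : ℂ) * ((ω (g * (h * (b * (h⁻¹ * g⁻¹)))) (g) (h) : ℂ) * ((ω (g) (h) (b) : ℂ)))))) ≠ 0 := by
    apply_rules [mul_ne_zero, Units.ne_zero]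
  have hE : ((ω (g * (h * (a * (b * (h⁻¹ * g⁻¹))))) (g) (h) : ℂ) * ((ω (g) (h) (a * b) : ℂ) * ((ω (g * (h * (a * (h⁻¹ * g⁻¹)))) (g) (h * (b * h⁻¹)) : ℂ) * ((ω (h * (a * h⁻¹)) (h) (b) : ℂ))))) ≠ 0 := by
    apply_rules [mul_ne_zero, Units.ne_zero]
  have Hbig : (((ω (g * h) (a) (b) : ℂ) * ((ω (g) (h) (a * b) : ℂ))) * (((ω (g * (h * (a * h⁻¹))) (h * (b * h⁻¹)) (h) : ℂ) * ((ω (g) (h * (a * h⁻¹)) (h * b) : ℂ))) * (((ω (g * (h * (a * h⁻¹))) (h) (b) : ℂ) * ((ω (g * (h * (a * (h⁻¹ * g⁻¹)))) (g) (h * b) : ℂ))) * ((ω (g * (h * (a * (b * (h⁻¹ * g⁻¹))))) (g) (h) : ℂ) * ((ω (g * (h * (a * (h⁻¹ * g⁻¹)))) (g * (h * (b * (h⁻¹ * g⁻¹)))) (g * h) : ℂ)))))) * (((ω (g) (h * (a * h⁻¹)) (h) : ℂ) * ((ω (g) (h * a) (b) : ℂ) * ((ω (h * (a * h⁻¹))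 (h) (b) : ℂ)))) * ((ω (g * (h * (a * (h⁻¹ * g⁻¹)))) (g) (h * (b * h⁻¹)) : ℂ) * ((ω (g * (h * (a * (h⁻¹ * g⁻¹)))) (g * (h * (b * h⁻¹))) (h) : ℂ) * ((ω (g) (h * (b * h⁻¹)) (h) : ℂ))))) = (((ω (g) (h) (a) : ℂ) * ((ω (g) (h * a) (b) : ℂ) * ((ω (h) (a) (b) : ℂ)))) * (((ω (g) (h * (a * h⁻¹)) (h * (b * h⁻¹)) : ℂ) * ((ω (g) (h * (a * (b * h⁻¹))) (h) : ℂ) * ((ω (h * (a * h⁻¹)) (h * (b * h⁻¹)) (h) : ℂ)))) * (((ω (g * (h * (a * (h⁻¹ * g⁻¹)))) (g) (h) : ℂ) * ((ω (g * (h * (a * (h⁻¹ * g⁻¹)))) (g * h) (b) : ℂ) * ((ω (g) (h) (b) : ℂ)))) * ((ω (g * (h * (a * (h⁻¹ * g⁻¹)))) (g * (h * (b * (h⁻¹ * g⁻¹)))) (g) : ℂ) * ((ω (g * (h * (a * (h⁻¹ * g⁻¹)))) (g * (h * (b * h⁻¹))) (h) : ℂ) * ((ω (g * (h * (b * (h⁻¹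 * g⁻¹)))) (g) (h) : ℂ))))))) * (((ω (g * (h * (a * h⁻¹))) (h) (b) : ℂ) * ((ω (g) (h * (a * h⁻¹)) (h * b) : ℂ))) * ((ω (g * (h * (a * h⁻¹))) (h * (b * h⁻¹)) (h) : ℂ) * ((ω (g * (h * (a * (h⁻¹ * g⁻¹)))) (g) (h * b) : ℂ)))) := by
    rw [c1, c2, c3, c4, c5, c6]
  have key : ((ω (g * h) (a) (b) : ℂ) * ((ω (g * (h * (a * (h⁻¹ * g⁻¹)))) (g * (h * (b * (h⁻¹ * g⁻¹)))) (g * h) : ℂ) * ((ω (g) (h * (a * h⁻¹)) (h) : ℂ) * ((ω (g) (h * (b * h⁻¹)) (h) : ℂ))))) * ((ω (g * (h * (a * (b * (h⁻¹ * g⁻¹))))) (g) (h) : ℂ) * ((ω (g) (h) (a * b) : ℂ) * ((ω (g * (h * (a * (h⁻¹ * g⁻¹)))) (g) (h * (b * h⁻¹)) : ℂ) * ((ω (h * (a * h⁻¹)) (h) (b) : ℂ))))) = ((ω (g) (h * (a * (b * h⁻¹))) (h) : ℂ) * ((ω (g) (h * (a * h⁻¹)) (h * (b * h⁻¹)) :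 ℂ) * ((ω (g * (h * (a * (h⁻¹ * g⁻¹)))) (g * (h * (b * (h⁻¹ * g⁻¹)))) (g) : ℂ) * ((ω (h) (a) (b) : ℂ) * ((ω (h * (a * h⁻¹)) (h * (b * h⁻¹)) (h) : ℂ)))))) * ((ω (g * (h * (a * (h⁻¹ * g⁻¹)))) (g * h) (b) : ℂ) * ((ω (g * (h * (a * (h⁻¹ * g⁻¹)))) (g) (h) : ℂ) * ((ω (g) (h) (a) : ℂ) * ((ω (g * (h * (b * (h⁻¹ * g⁻¹)))) (g) (h) : ℂ) * ((ω (g) (h) (b) : ℂ)))))) := by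
    refine mul_right_cancel₀ (b := (((ω (g * h) (a) (b) : ℂ) * ((ω (g) (h) (a * b) : ℂ))) * (((ω (g * (h * (a * h⁻¹))) (h * (b * h⁻¹)) (h) : ℂ) * ((ω (g) (h * (a * h⁻¹)) (h * b) : ℂ))) * (((ω (g * (h * (a * h⁻¹))) (h) (b) : ℂ) * ((ω (g * (h * (a * (h⁻¹ * g⁻¹)))) (g) (h * b) : ℂ))) * ((ω (g * (h * (a * (b * (h⁻¹ * g⁻¹))))) (g) (h) : ℂ) * ((ω (g * (h * (a * (h⁻¹ * g⁻¹)))) (g * (h * (b * (h⁻¹ * g⁻¹)))) (g * h) : ℂ)))))) * (((ω (g) (h * (a * h⁻¹)) (h) : ℂ) * ((ω (g) (h * a) (b) : ℂ) * ((ω (h * (a * h⁻¹)) (h) (b) : ℂ)))) * ((ω (g * (h * (a * (h⁻¹ * g⁻¹)))) (g) (h * (b * h⁻¹)) : ℂ) * ((ω (g * (h * (a * (h⁻¹ * g⁻¹)))) (g * (h * (b * h⁻¹))) (h) : ℂ) * ((ω (g) (h * (b * h⁻¹)) (h) : ℂ)))))) ?_ ?_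
    · apply_rules [mul_ne_zero, Units.ne_zero]
    · conv_lhs => rw [Hbig]
      ring
  calc (ω (g * h) (a) (b) : ℂ) * ((ω (g * (h * (a * (h⁻¹ * g⁻¹)))) (g * h) (b) : ℂ)⁻¹ * ((ω (g * (h * (a * (h⁻¹ * g⁻¹)))) (g * (h * (b * (h⁻¹ * g⁻¹)))) (g * h) : ℂ) * ((ω (g) (h * (a * h⁻¹)) (h) : ℂ) * ((ω (g * (h * (a * (h⁻¹ * g⁻¹)))) (g) (h) : ℂ)⁻¹ * ((ω (g) (h) (a) : ℂ)⁻¹ * ((ω (g) (h * (b * h⁻¹)) (h) : ℂ) * ((ω (g * (h * (b * (h⁻¹ * g⁻¹)))) (g) (h) : ℂ)⁻¹ * ((ω (g) (h) (b) : ℂ)⁻¹))))))))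
      = (((ω (g * h) (a) (b) : ℂ) * ((ω (g * (h * (a * (h⁻¹ * g⁻¹)))) (g * (h * (b * (h⁻¹ * g⁻¹)))) (g * h) : ℂ) * ((ω (g) (h * (a * h⁻¹)) (h) : ℂ) * ((ω (g) (h * (b * h⁻¹)) (h) : ℂ))))) / ((ω (g * (h * (a * (h⁻¹ * g⁻¹)))) (g * h) (b) : ℂ) * ((ω (g * (h * (a * (h⁻¹ * g⁻¹)))) (g) (h) : ℂ) * ((ω (g) (h) (a) : ℂ) * ((ω (g * (h * (b * (h⁻¹ * g⁻¹)))) (g) (h) : ℂ) * ((ω (g) (h) (b) : ℂ))))))) := by ring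
    _ = (((ω (g) (h * (a * (b * h⁻¹))) (h) : ℂ) * ((ω (g) (h * (a * h⁻¹)) (h * (b * h⁻¹)) : ℂ) * ((ω (g * (h * (a * (h⁻¹ * g⁻¹)))) (g * (h * (b * (h⁻¹ * g⁻¹)))) (g) : ℂ) * ((ω (h) (a) (b) : ℂ) * ((ω (h * (a * h⁻¹)) (h * (b * h⁻¹)) (h) : ℂ)))))) / ((ω (g * (h * (a * (b * (h⁻¹ * g⁻¹))))) (g) (h) : ℂ) * ((ω (g) (h) (a * b) : ℂ) * ((ω (g * (h * (a * (h⁻¹ * g⁻¹)))) (g) (h * (b * h⁻¹)) : ℂ) * ((ω (h * (a * h⁻¹)) (h) (b) : ℂ)))))) := by rw [div_eq_div_iff hD hE]; exact key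
    _ = (ω (g) (h * (a * (b * h⁻¹))) (h) : ℂ) * ((ω (g * (h * (a * (b * (h⁻¹ * g⁻¹))))) (g) (h) : ℂ)⁻¹ * ((ω (g) (h) (a * b) : ℂ)⁻¹ * ((ω (g) (h * (a * h⁻¹)) (h * (b * h⁻¹)) : ℂ) * ((ω (g * (h * (a * (h⁻¹ * g⁻¹)))) (g) (h * (b * h⁻¹)) : ℂ)⁻¹ * ((ω (g * (h * (a * (h⁻¹ * g⁻¹)))) (g * (h * (b * (h⁻¹ * g⁻¹)))) (g) : ℂ) * ((ω (h) (a) (b) : ℂ) * ((ω (h * (a * h⁻¹)) (h) (b) : ℂ)⁻¹ * ((ω (h * (a * h⁻¹)) (h * (b * h⁻¹)) (h) : ℂ))))))))) := by ring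

section AuxLamN
variable {G X : Type} [Group G]

theorem LamN_one (ω : G → G → G → ℂˣ) (lam : G → X → ℂˣ) (d : X → G)
    (hω : ∀ a b c e : G,
      ω (a * b) c e * ω a b (c * e) = ω a b c * ω a (b * c) e * ω b c e)
    (hωn : ∀ a b : G, ω a 1 b = 1)
    (hlam1 : ∀ x : X, lam 1 x = 1)
    {n : ℕ} (x : Fin n → X) : LamN ω lam d 1 x = 1 := by
  simp [LamN, hlam1, omega1_one_left ω hω hωn]

theorem LamN_succ (ω : G → G → G → ℂˣ) (lam : G → X → ℂˣ) (d : X → G)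
    (hω : ∀ a b c e : G,
      ω (a * b) c e * ω a b (c * e) = ω a b c * ω a (b * c) e * ω b c e)
    (hωn : ∀ a b : G, ω a 1 b = 1)
    {n : ℕ} (g : G) (x : Fin (n + 1) → X) :
    LamN ω lam d g x = LamN ω lam d g (Fin.init x) *
      (lam g (x (Fin.last n)) * omega1 ω g (pparts d x n) (d (x (Fin.last n)))) := by
  have e1 : (∏ i : Fin (n + 1), lam g (x i)) =
      (∏ i : Fin n, lam g (Fin.init x i)) * lam g (x (Fin.last n)) := by
    rw [Fin.prod_univ_castSucc]
    rfl
  have e2 : (∏ k : Fin (n + 1), if k.1 = 0 then 1 else omega1 ω g (pparts d x k.1) (d (x k))) =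
      (∏ k : Fin n, if k.1 = 0 then 1 else
          omega1 ω g (pparts d (Fin.init x) k.1) (d (Fin.init x k))) *
        omega1 ω g (pparts d x n) (d (x (Fin.last n))) := by
    rw [Fin.prod_univ_castSucc]
    congr 1
    · refine Finset.prod_congr rfl fun k _ => ?_
      rw [pparts_init d x k.1 (le_of_lt k.2)]
      rfl
    · rcases Nat.eq_zero_or_pos n with hn | hn
      · subst hn
        simp [pparts_zero, omega1_mid_one ω hω hωn]
      · rw [if_neg (by simp only [Fin.val_last]; omega)]
        rfl
  rw [LamN, LamN, e1, e2, mul_mul_mul_comm]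

theorem LamN_mul (ω : G → G → G → ℂˣ) (lam : G → X → ℂˣ) (d : X → G) (act : G → X → X)
    (hω : ∀ a b c e : G,
      ω (a * b) c e * ω a b (c * e) = ω a b c * ω a (b * c) e * ω b c e)
    (hωn : ∀ a b : G, ω a 1 b = 1)
    (hd : ∀ (g : G) (x : X), d (act g x) = g * d x * g⁻¹)
    (hlamm : ∀ (g h : G) (x : X),
      lam (g * h) x = omega2 ω g h (d x) * lam g (act h x) * lam h x)
    {n : ℕ} (g h : G) (x : Fin n → X) :
    LamN ω lam d (g * h) x =
      omega2 ω g h (pparts d x n) * LamN ω lam d g (fun i => act h (x i)) *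
        LamN ω lam d h x := by
  induction n with
  | zero =>
      simp [LamN, pparts_zero, omega2_one_right ω hω hωn]
  | succ n ih =>
      rw [LamN_succ ω lam d hω hωn (g * h) x,
        LamN_succ ω lam d hω hωn g (fun i => act h (x i)),
        LamN_succ ω lam d hω hωn h x]
      have einit : Fin.init (fun i => act h (x i)) = fun i => act h (Fin.init x i) := rfl
      rw [einit, ih (Fin.init x), pparts_init d x n (le_refl n),
        pparts_act d act hd h x n (Nat.le_succ n), hd h (x (Fin.last n)),
        hlamm g h (x (Fin.last n)), pparts_last d x]
      have hs := congrArg Units.val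
        (star_id ω hω g h (pparts d x n) (d (x (Fin.last n))))
      push_cast at hs
      apply Units.ext
      push_cast
      linear_combination (↑(LamN ω lam d g fun i => act h (Fin.init x i)) *
        ↑(LamN ω lam d h (Fin.init x)) * ↑(lam g (act h (x (Fin.last n)))) *
        ↑(lam h (x (Fin.last n))) : ℂ) * hs

end AuxLamN

section AuxOrb
variable {G X : Type} [Group G]

theorem LamN_mul' (ω : G → G → G → ℂˣ) (lam : G → X → ℂˣ) (d : X → G) (act : G → X → X)
    (hω : ∀ a b c e : G,
      ω (a * b) c e * ω a b (c * e) = ω a b c * ω a (b * c) e * ω b c e)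
    (hωn : ∀ a b : G, ω a 1 b = 1)
    (hd : ∀ (g : G) (x : X), d (act g x) = g * d x * g⁻¹)
    (hlamm : ∀ (g h : G) (x : X),
      lam (g * h) x = omega2 ω g h (d x) * lam g (act h x) * lam h x)
    {n : ℕ} (g h : G) (x : Fin n → X) (hx : pparts d x n = 1) :
    LamN ω lam d (g * h) x =
      LamN ω lam d g (fun i => act h (x i)) * LamN ω lam d h x := by
  rw [LamN_mul ω lam d act hω hωn hd hlamm, hx, omega2_one_right ω hω hωn, one_mul]

theorem LamN_stab_congr (ω : G → G → G → ℂˣ) (lam : G → X → ℂˣ) (d : X → G) (act : G → X → X)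
    (hω : ∀ a b c e : G,
      ω (a * b) c e * ω a b (c * e) = ω a b c * ω a (b * c) e * ω b c e)
    (hωn : ∀ a b : G, ω a 1 b = 1)
    (hact1 : ∀ x : X, act 1 x = x)
    (hactm : ∀ (g h : G) (x : X), act (g * h) x = act g (act h x))
    (hd : ∀ (g : G) (x : X), d (act g x) = g * d x * g⁻¹)
    (hlamm : ∀ (g h : G) (x : X),
      lam (g * h) x = omega2 ω g h (d x) * lam g (act h x) * lam h x)
    {n : ℕ} (x : Fin n → X) (hreg : RegT ω lam d act x) (g g' : G)
    (hgg : ∀ i, act g (x i) = act g' (x i)) :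
    LamN ω lam d g x = LamN ω lam d g' x := by
  have hs : ∀ i, act (g'⁻¹ * g) (x i) = x i := fun i => by
    rw [hactm, hgg i, ← hactm, inv_mul_cancel, hact1]
  have e := LamN_mul' ω lam d act hω hωn hd hlamm g' (g'⁻¹ * g) x hreg.1
  rw [hreg.2 _ hs, mul_one, funext hs, show g' * (g'⁻¹ * g) = g by group] at e
  exact e

theorem RegT_orbit (ω : G → G → G → ℂˣ) (lam : G → X → ℂˣ) (d : X → G) (act : G → X → X)
    (hω : ∀ a b c e : G,
      ω (a * b) c e * ω a b (c * e) = ω a b c * ω a (b * c) e * ω b c e)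
    (hωn : ∀ a b : G, ω a 1 b = 1)
    (hact1 : ∀ x : X, act 1 x = x)
    (hactm : ∀ (g h : G) (x : X), act (g * h) x = act g (act h x))
    (hd : ∀ (g : G) (x : X), d (act g x) = g * d x * g⁻¹)
    (hlamm : ∀ (g h : G) (x : X),
      lam (g * h) x = omega2 ω g h (d x) * lam g (act h x) * lam h x)
    {n : ℕ} (x : Fin n → X) (hx : RegT ω lam d act x) (h : G) :
    RegT ω lam d act (fun i => act h (x i)) := by
  constructor
  · rw [pparts_act d act hd h x n le_rfl, hx.1]
    group
  · intro g' hg'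
    have hs : ∀ i, act (h⁻¹ * (g' * h)) (x i) = x i := fun i => by
      rw [hactm, hactm, hg' i, ← hactm, inv_mul_cancel, hact1]
    have e2 := LamN_mul' ω lam d act hω hωn hd hlamm h (h⁻¹ * (g' * h)) x hx.1
    rw [hx.2 _ hs, mul_one, funext hs] at e2
    have e1 := LamN_mul' ω lam d act hω hωn hd hlamm g' h x hx.1
    rw [show g' * h = h * (h⁻¹ * (g' * h)) by group, e2] at e1
    exact right_eq_mul.mp e1

theorem orb_equivalence (act : G → X → X)
    (hact1 : ∀ x : X, act 1 x = x)
    (hactm : ∀ (g h : G) (x : X), act (g * h) x = act g (act h x))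
    {n : ℕ} : Equivalence (tupleOrbRel act (n := n)) := by
  constructor
  · exact fun x => ⟨1, funext fun i => hact1 _⟩
  · rintro x y ⟨g, hg⟩
    exact ⟨g⁻¹, funext fun i => by
      rw [← congrFun hg i]; show act g⁻¹ (act g (x i)) = x i
      rw [← hactm, inv_mul_cancel, hact1]⟩
  · rintro x y z ⟨g, hg⟩ ⟨g', hg'⟩
    exact ⟨g' * g, funext fun i => by
      rw [hactm, congrFun hg i, congrFun hg' i]⟩

theorem mem_invSub_iff (ω : G → G → G → ℂˣ) (lam : G → X → ℂˣ) (d : X → G) (act : G → X → X)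
    (hact1 : ∀ x : X, act 1 x = x)
    (hactm : ∀ (g h : G) (x : X), act (g * h) x = act g (act h x))
    {n : ℕ} (φ : (Fin n → X) → ℂ) :
    φ ∈ invSub ω lam d act n ↔
      (∀ x : Fin n → X, pparts d x n ≠ 1 → φ x = 0) ∧
        ∀ (g : G) (x : Fin n → X),
          φ (fun i => act g (x i)) = (LamN ω lam d g x : ℂ) * φ x := by
  rw [invSub, Submodule.mem_inf, Submodule.mem_iInf]
  apply and_congr Iff.rfl
  constructor
  · intro hG g x
    have h2 : rhoL ω lam d act g φ = φ := LinearMap.mem_eqLocus.mp (hG g)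
    have h3 := congrFun h2 (fun i => act g (x i))
    simp only [rhoL, LinearMap.coe_mk, AddHom.coe_mk] at h3
    have hxy : (fun i => act g⁻¹ (act g (x i))) = x := funext fun i => by
      rw [← hactm, inv_mul_cancel, hact1]
    rw [hxy] at h3
    exact h3.symm
  · intro hP g
    rw [LinearMap.mem_eqLocus]
    funext y
    simp only [rhoL, LinearMap.coe_mk, AddHom.coe_mk, LinearMap.id_coe, id_eq]
    have hxy : (fun i => act g (act g⁻¹ (y i))) = y := funext fun i => by
      rw [← hactm, mul_inv_cancel, hact1]
    calc (LamN ω lam d g (fun i => act g⁻¹ (y i)) : ℂ) * φ (fun i => act g⁻¹ (y i))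
        = φ (fun i => act g (act g⁻¹ (y i))) := (hP g (fun i => act g⁻¹ (y i))).symm
      _ = φ y := by rw [hxy]

end AuxOrb

section AuxMain
variable {G X : Type} [Group G]

/-- The subtype of regular orbits. -/
def RegOrb (ω : G → G → G → ℂˣ) (lam : G → X → ℂˣ) (d : X → G) (act : G → X → X)
    (n : ℕ) : Type :=
  {O : Quot (tupleOrbRel act (n := n)) //
    ∃ x : Fin n → X, Quot.mk (tupleOrbRel act) x = O ∧ RegT ω lam d act x}

noncomputable def repT (ω : G → G → G → ℂˣ) (lam : G → X → ℂˣ) (d : X → G)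
    (act : G → X → X) (n : ℕ) (O : RegOrb ω lam d act n) : Fin n → X :=
  O.2.choose

theorem repT_spec1 (ω : G → G → G → ℂˣ) (lam : G → X → ℂˣ) (d : X → G)
    (act : G → X → X) (n : ℕ) (O : RegOrb ω lam d act n) :
    Quot.mk (tupleOrbRel act) (repT ω lam d act n O) = O.1 :=
  O.2.choose_spec.1

theorem repT_spec2 (ω : G → G → G → ℂˣ) (lam : G → X → ℂˣ) (d : X → G)
    (act : G → X → X) (n : ℕ) (O : RegOrb ω lam d act n) :
    RegT ω lam d act (repT ω lam d act n O) :=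
  O.2.choose_spec.2

def Pex (ω : G → G → G → ℂˣ) (lam : G → X → ℂˣ) (d : X → G) (act : G → X → X)
    (n : ℕ) (y : Fin n → X) : Prop :=
  ∃ p : RegOrb ω lam d act n × G, (fun i => act p.2 (repT ω lam d act n p.1 i)) = y

noncomputable def Bfun (ω : G → G → G → ℂˣ) (lam : G → X → ℂˣ) (d : X → G)
    (act : G → X → X) (n : ℕ) (c : RegOrb ω lam d act n → ℂ) : (Fin n → X) → ℂ :=
  fun y =>
    if hy : Pex ω lam d act n y then
      c hy.choose.1 * (LamN ω lam d hy.choose.2 (repT ω lam d act n hy.choose.1) : ℂ)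
    else 0

variable (ω : G → G → G → ℂˣ) (lam : G → X → ℂˣ) (d : X → G) (act : G → X → X)
variable (hω : ∀ a b c e : G,
      ω (a * b) c e * ω a b (c * e) = ω a b c * ω a (b * c) e * ω b c e)
    (hωn : ∀ a b : G, ω a 1 b = 1)
    (hact1 : ∀ x : X, act 1 x = x)
    (hactm : ∀ (g h : G) (x : X), act (g * h) x = act g (act h x))
    (hd : ∀ (g : G) (x : X), d (act g x) = g * d x * g⁻¹)
    (hlam1 : ∀ x : X, lam 1 x = 1)
    (hlamm : ∀ (g h : G) (x : X),
      lam (g * h) x = omega2 ω g h (d x) * lam g (act h x) * lam h x)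
    {n : ℕ}

include hω hωn hact1 hactm hd hlamm in
theorem key_unique (O O' : RegOrb ω lam d act n) (g g' : G)
    (hee : (fun i => act g (repT ω lam d act n O i)) =
      (fun i => act g' (repT ω lam d act n O' i))) :
    O = O' ∧ (LamN ω lam d g (repT ω lam d act n O) : ℂˣ) =
      LamN ω lam d g' (repT ω lam d act n O') := by
  have hOO : O = O' := by
    apply Subtype.ext
    rw [← repT_spec1 ω lam d act n O, ← repT_spec1 ω lam d act n O']
    apply Quot.sound
    refine ⟨g'⁻¹ * g, funext fun i => ?_⟩
    rw [hactm, congrFun hee i]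
    show act g'⁻¹ (act g' (repT ω lam d act n O' i)) = repT ω lam d act n O' i
    rw [← hactm, inv_mul_cancel, hact1]
  subst hOO
  refine ⟨rfl, ?_⟩
  exact LamN_stab_congr ω lam d act hω hωn hact1 hactm hd hlamm _
    (repT_spec2 ω lam d act n O) g g' (fun i => congrFun hee i)

include hω hωn hact1 hactm hd hlamm in
theorem Bfun_eval (c : RegOrb ω lam d act n → ℂ) (O : RegOrb ω lam d act n) (g : G) :
    Bfun ω lam d act n c (fun i => act g (repT ω lam d act n O i)) =
      c O * (LamN ω lam d g (repT ω lam d act n O) : ℂ) := by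
  have hy : Pex ω lam d act n (fun i => act g (repT ω lam d act n O i)) := ⟨(O, g), rfl⟩
  rw [Bfun, dif_pos hy]
  obtain ⟨hOO, hLL⟩ := key_unique ω lam d act hω hωn hact1 hactm hd hlamm
    hy.choose.1 O hy.choose.2 g hy.choose_spec
  rw [hLL, hOO]

theorem Bfun_not (c : RegOrb ω lam d act n → ℂ) (y : Fin n → X)
    (hy : ¬ Pex ω lam d act n y) : Bfun ω lam d act n c y = 0 := by
  rw [Bfun, dif_neg hy]

include hω hωn hact1 hactm hd hlamm in
theorem Bfun_mem (c : RegOrb ω lam d act n → ℂ) :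
    Bfun ω lam d act n c ∈ invSub ω lam d act n := by
  rw [mem_invSub_iff ω lam d act hact1 hactm]
  constructor
  · intro x hx
    apply Bfun_not
    rintro ⟨p, hp⟩
    apply hx
    rw [← hp, pparts_act d act hd _ _ n le_rfl, (repT_spec2 ω lam d act n p.1).1]
    group
  · intro g y
    by_cases hy : Pex ω lam d act n y
    · obtain ⟨⟨O, g₁⟩, hp⟩ := hy
      subst hp
      show Bfun ω lam d act n c (fun i => act g (act g₁ (repT ω lam d act n O i))) =
        _ * Bfun ω lam d act n c (fun i => act g₁ (repT ω lam d act n O i))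
      have hgg : (fun i => act g (act g₁ (repT ω lam d act n O i))) =
          (fun i => act (g * g₁) (repT ω lam d act n O i)) :=
        funext fun i => (hactm g g₁ _).symm
      rw [hgg, Bfun_eval ω lam d act hω hωn hact1 hactm hd hlamm,
        Bfun_eval ω lam d act hω hωn hact1 hactm hd hlamm,
        LamN_mul' ω lam d act hω hωn hd hlamm g g₁ _ (repT_spec2 ω lam d act n O).1]
      push_cast
      ring
    · have hgy : ¬ Pex ω lam d act n (fun i => act g (y i)) := by
        rintro ⟨p, hp⟩
        apply hy
        refine ⟨(p.1, g⁻¹ * p.2), funext fun i => ?_⟩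
        rw [hactm, congrFun hp i]
        show act g⁻¹ (act g (y i)) = y i
        rw [← hactm, inv_mul_cancel, hact1]
      rw [Bfun_not ω lam d act c _ hy, Bfun_not ω lam d act c _ hgy, mul_zero]

end AuxMain



/-- For a finite group `G`, a normalized 3-cocycle `ω`, a finite
crossed `G`-set `X` and a twisted monomial structure `λ` on `X`, the dimension of
the `G`-invariant subspace `(V^{⊗n}_e)^G` equals the number of regular
`G`-orbits under the monomial action of `G` on
`(X^n)_e = {(x_1,…,x_n) : |x_1|⋯|x_n| = e}`. -/
theorem finrank_invariants_eq_card_regular_orbits {G X : Type} [Group G] [Fintype G]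
    (ω : G → G → G → ℂˣ) (lam : G → X → ℂˣ) (d : X → G) (act : G → X → X)
    (hω : ∀ a b c e : G,
      ω (a * b) c e * ω a b (c * e) = ω a b c * ω a (b * c) e * ω b c e)
    (hωn : ∀ a b : G, ω a 1 b = 1)
    (hact1 : ∀ x : X, act 1 x = x)
    (hactm : ∀ (g h : G) (x : X), act (g * h) x = act g (act h x))
    (hd : ∀ (g : G) (x : X), d (act g x) = g * d x * g⁻¹)
    (hlam1 : ∀ x : X, lam 1 x = 1)
    (hlamm : ∀ (g h : G) (x : X),
      lam (g * h) x = omega2 ω g h (d x) * lam g (act h x) * lam h x)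
    (n : ℕ) :
    Module.finrank ℂ (invSub ω lam d act n) =
      Nat.card {O : Quot (tupleOrbRel act (n := n)) //
        ∃ x : Fin n → X, Quot.mk (tupleOrbRel act) x = O ∧ RegT ω lam d act x} := by
  classical
  show Module.finrank ℂ (invSub ω lam d act n) = Nat.card (RegOrb ω lam d act n)
  have E : (invSub ω lam d act n) ≃ₗ[ℂ] (RegOrb ω lam d act n → ℂ) := by
    refine
      { toFun := fun φ O => φ.1 (repT ω lam d act n O)
        map_add' := fun φ ψ => rfl
        map_smul' := fun c φ => rfl
        invFun := fun c => ⟨Bfun ω lam d act n c,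
          Bfun_mem ω lam d act hω hωn hact1 hactm hd hlamm c⟩
        left_inv := ?_
        right_inv := ?_ }
    · -- left inverse
      rintro ⟨φ, hφ⟩
      rw [mem_invSub_iff ω lam d act hact1 hactm] at hφ
      apply Subtype.ext
      funext y
      show Bfun ω lam d act n (fun O => φ (repT ω lam d act n O)) y = φ y
      by_cases hy : Pex ω lam d act n y
      · obtain ⟨⟨O, g⟩, hp⟩ := hy
        subst hp
        rw [Bfun_eval ω lam d act hω hωn hact1 hactm hd hlamm]
        rw [hφ.2 g (repT ω lam d act n O)]
        ring
      · rw [Bfun_not ω lam d act _ _ hy]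
        by_cases hdeg : pparts d y n = 1
        · by_cases hregy : ∀ g', (∀ i, act g' (y i) = y i) → LamN ω lam d g' y = 1
          · exfalso
            apply hy
            have hOreg : RegT ω lam d act y := ⟨hdeg, hregy⟩
            set O : RegOrb ω lam d act n := ⟨Quot.mk (tupleOrbRel act) y, ⟨y, rfl, hOreg⟩⟩
            have hq : Quot.mk (tupleOrbRel act) (repT ω lam d act n O) =
                Quot.mk (tupleOrbRel act) y := repT_spec1 ω lam d act n O
            obtain ⟨g, hg⟩ := (orb_equivalence act hact1 hactm).eqvGen_iff.mp
              (Quot.eqvGen_exact hq)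
            exact ⟨(O, g), hg⟩
          · push_neg at hregy
            obtain ⟨s, hs, hneq⟩ := hregy
            have h0 := hφ.2 s y
            rw [funext hs] at h0
            have h1 : ((LamN ω lam d s y : ℂ) - 1) * φ y = 0 := by linear_combination -h0
            rcases mul_eq_zero.mp h1 with h2 | h2
            · exact absurd (Units.ext (by rw [Units.val_one]; linear_combination h2)) hneq
            · exact h2.symm
        · exact (hφ.1 y hdeg).symm
    · -- right inverse
      intro c
      funext O
      show Bfun ω lam d act n c (repT ω lam d act n O) = c O
      rw [show repT ω lam d act n O = fun i => act (1 : G) (repT ω lam d act n O i) from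
        funext fun i => (hact1 _).symm]
      rw [Bfun_eval ω lam d act hω hωn hact1 hactm hd hlamm,
        LamN_one ω lam d hω hωn hlam1, Units.val_one, mul_one]
  rw [E.finrank_eq]
  rcases finite_or_infinite (RegOrb ω lam d act n) with hf | hf
  · have : Fintype (RegOrb ω lam d act n) := Fintype.ofFinite _
    rw [Module.finrank_pi, Nat.card_eq_fintype_card]
  · rw [Nat.card_eq_zero_of_infinite]
    have hni : ¬ FiniteDimensional ℂ (RegOrb ω lam d act n → ℂ) := by
      intro hFD
      have hinj : Function.Injective
          (Finsupp.lcoeFun (α := RegOrb ω lam d act n) (M := ℂ) (R := ℂ)) := by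
        intro a b hab
        exact DFunLike.coe_injective hab
      have : FiniteDimensional ℂ (RegOrb ω lam d act n →₀ ℂ) :=
        FiniteDimensional.of_injective Finsupp.lcoeFun hinj
      have hlt := Module.rank_lt_aleph0 ℂ (RegOrb ω lam d act n →₀ ℂ)
      rw [rank_finsupp_self] at hlt
      simp only [Cardinal.lift_id] at hlt
      exact absurd hlt (not_lt.mpr (Cardinal.aleph0_le_mk _))
    exact Module.finrank_of_infinite_dimensional hni
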